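/- For the model quantity W_R = ((Ψⁿ - Rⁿ)/Ψ^{n-1})², expressed via the pseudo-radial function Ψ = ψ±(u), one has the expansion W_R = 2n(u_max - u) ∓ (4(n-1)√(2n)/(3R))(u_max - u)^{3/2} + O((u_max - u)²) as u → u_max, with the minus sign for Ψ = ψ₊ and the plus sign for Ψ = ψ₋. In particular W_R/(u_max - u) → 2n. -/

import Mathlib

set_option maxHeartbeats 1000000

open Set Filter Topology

lemma WRaux_cube_le (m : ℕ) : ((m:ℝ))^3 ≤ 6 * 2^m := by
  induction m with
  | zero => norm_num
  | succ k ih =>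
    rcases Nat.lt_or_ge k 4 with hk | hk
    · interval_cases k <;> norm_num
    · have hk4 : (4:ℝ) ≤ (k:ℝ) := by exact_mod_cast hk
      have h2 : ((k:ℝ)+1)^3 ≤ 2 * (k:ℝ)^3 := by
        nlinarith [mul_nonneg (sq_nonneg (k:ℝ)) (by linarith : (0:ℝ) ≤ (k:ℝ)-4),
          mul_nonneg (by linarith : (0:ℝ) ≤ (k:ℝ)) (by linarith : (0:ℝ) ≤ (k:ℝ)-4)]
      push_cast
      calc ((k:ℝ)+1)^3 ≤ 2 * (k:ℝ)^3 := h2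
        _ ≤ 2 * (6*2^k) := by linarith
        _ = 6 * 2^(k+1) := by ring

lemma WRaux_a3_bound (m : ℕ) :
    |(m:ℝ)*((m:ℝ)-1)*((m:ℝ)-2)/6| ≤ 2^m := by
  rcases Nat.lt_or_ge m 2 with hm | hm
  · interval_cases m <;> norm_num
  · have hm2 : (2:ℝ) ≤ (m:ℝ) := by exact_mod_cast hm
    have h0 : (0:ℝ) ≤ (m:ℝ)*((m:ℝ)-1)*((m:ℝ)-2)/6 := by
      have := mul_nonneg (mul_nonneg (by linarith : (0:ℝ) ≤ (m:ℝ)) (by linarith : (0:ℝ) ≤ (m:ℝ)-1)) (by linarith : (0:ℝ) ≤ (m:ℝ)-2)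
      linarith
    rw [abs_of_nonneg h0]
    have h1 : (m:ℝ)*((m:ℝ)-1)*((m:ℝ)-2) ≤ (m:ℝ)^3 := by nlinarith
    have := WRaux_cube_le m
    linarith

lemma WRaux_binom (m : ℕ) : ∀ x : ℝ, |x| ≤ 1/2 →
    |(1+x)^m - (1 + m*x + (m:ℝ)*((m:ℝ)-1)/2*x^2 + (m:ℝ)*((m:ℝ)-1)*((m:ℝ)-2)/6*x^3)|
      ≤ 2^(m+1) * x^4 := by
  induction m with
  | zero => intro x hx; simp; positivity
  | succ k ih =>
    intro x hx
    have hx1 : |x| ≤ 1 := by linarith [abs_nonneg x]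
    have h1x : |1 + x| ≤ 3/2 := by
      rw [abs_le] at hx ⊢; constructor <;> linarith [hx.1, hx.2]
    have key : (1+x)^(k+1) - (1 + (↑(k+1):ℝ)*x + (↑(k+1):ℝ)*((↑(k+1):ℝ)-1)/2*x^2 + (↑(k+1):ℝ)*((↑(k+1):ℝ)-1)*((↑(k+1):ℝ)-2)/6*x^3)
        = (1+x) * ((1+x)^k - (1 + k*x + (k:ℝ)*((k:ℝ)-1)/2*x^2 + (k:ℝ)*((k:ℝ)-1)*((k:ℝ)-2)/6*x^3))
          + ((k:ℝ)*((k:ℝ)-1)*((k:ℝ)-2)/6) * x^4 := by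
      push_cast
      ring
    rw [key]
    have e1 := ih x hx
    have e2 := WRaux_a3_bound k
    have hx4 : (0:ℝ) ≤ x^4 := by positivity
    calc |(1+x) * ((1+x)^k - (1 + k*x + (k:ℝ)*((k:ℝ)-1)/2*x^2 + (k:ℝ)*((k:ℝ)-1)*((k:ℝ)-2)/6*x^3))
          + ((k:ℝ)*((k:ℝ)-1)*((k:ℝ)-2)/6) * x^4|
        ≤ |1+x| * |(1+x)^k - (1 + k*x + (k:ℝ)*((k:ℝ)-1)/2*x^2 + (k:ℝ)*((k:ℝ)-1)*((k:ℝ)-2)/6*x^3)|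
          + |(k:ℝ)*((k:ℝ)-1)*((k:ℝ)-2)/6| * x^4 := by
          calc |(1+x) * ((1+x)^k - (1 + k*x + (k:ℝ)*((k:ℝ)-1)/2*x^2 + (k:ℝ)*((k:ℝ)-1)*((k:ℝ)-2)/6*x^3))
          + ((k:ℝ)*((k:ℝ)-1)*((k:ℝ)-2)/6) * x^4| ≤ |(1+x) * ((1+x)^k - (1 + k*x + (k:ℝ)*((k:ℝ)-1)/2*x^2 + (k:ℝ)*((k:ℝ)-1)*((k:ℝ)-2)/6*x^3))| + |((k:ℝ)*((k:ℝ)-1)*((k:ℝ)-2)/6) * x^4| := abs_add_le _ _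
            _ = _ := by rw [abs_mul, abs_mul, abs_of_nonneg hx4]
      _ ≤ (3/2) * (2^(k+1) * x^4) + 2^k * x^4 := by
          gcongr
      _ ≤ 2^(k+1+1) * x^4 := by
          have h : (3/2) * ((2:ℝ)^(k+1) * x^4) + 2^k * x^4 = 2^(k+1+1) * x^4 := by ring
          linarith [h.le]

lemma WRaux_cubic_bound (a b c d x : ℝ) (hx : |x| ≤ 1) :
    |a + b*x + c*x^2 + d*x^3| ≤ |a| + |b| + |c| + |d| := by
  have h1 : |b*x| ≤ |b| := by
    rw [abs_mul]; exact mul_le_of_le_one_right (abs_nonneg b) hx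
  have h2 : |c*x^2| ≤ |c| := by
    rw [abs_mul, abs_pow]
    exact mul_le_of_le_one_right (abs_nonneg c) (pow_le_one₀ (abs_nonneg x) hx)
  have h3 : |d*x^3| ≤ |d| := by
    rw [abs_mul, abs_pow]
    exact mul_le_of_le_one_right (abs_nonneg d) (pow_le_one₀ (abs_nonneg x) hx)
  calc |a + b*x + c*x^2 + d*x^3| ≤ |a + b*x + c*x^2| + |d*x^3| := abs_add_le _ _
    _ ≤ (|a + b*x| + |c*x^2|) + |d*x^3| := by linarith [abs_add_le (a + b*x) (c*x^2)]
    _ ≤ ((|a| + |b*x|) + |c*x^2|) + |d*x^3| := by linarith [abs_add_le a (b*x)]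
    _ ≤ |a| + |b| + |c| + |d| := by linarith

lemma WRaux_inv (m : ℕ) : ∃ C : ℝ, 0 ≤ C ∧ ∀ x : ℝ, |x| ≤ 1/2 →
    |1/(1+x)^m - (1 - m*x + (m:ℝ)*((m:ℝ)+1)/2*x^2 - (m:ℝ)*((m:ℝ)+1)*((m:ℝ)+2)/6*x^3)|
      ≤ C * x^4 := by
  set K : ℝ := |(-((m:ℝ)^2*((m:ℝ)^2+11)/12))| + |(-((m:ℝ)^2*((m:ℝ)^2-1)/3))|
    + |(-((m:ℝ)^2*((m:ℝ)^2-1)*((m:ℝ)^2-4)/36))| + |(0:ℝ)| with hK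
  set Q : ℝ := |(1:ℝ)| + |(-(m:ℝ))| + |(m:ℝ)*((m:ℝ)+1)/2| + |(-((m:ℝ)*((m:ℝ)+1)*((m:ℝ)+2)/6))| with hQ
  have hK0 : 0 ≤ K := by positivity
  have hQ0 : 0 ≤ Q := by positivity
  refine ⟨2^m * (K + Q * 2^(m+1)), by positivity, ?_⟩
  intro x hx
  have hx1 : |x| ≤ 1 := by linarith [abs_nonneg x]
  have hax := abs_le.1 hx
  have h1x : (1:ℝ)/2 ≤ 1 + x := by linarith [hax.1]
  have h1xpos : (0:ℝ) < 1 + x := by linarith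
  have hPpos : (0:ℝ) < (1+x)^m := pow_pos h1xpos m
  have hPinv : 1/(1+x)^m ≤ 2^m := by
    rw [div_le_iff₀ hPpos]
    calc (1:ℝ) = 2^m * (1/2)^m := by rw [← mul_pow]; norm_num
      _ ≤ 2^m * (1+x)^m := by
          gcongr
          all_goals norm_num
  set q : ℝ := 1 - m*x + (m:ℝ)*((m:ℝ)+1)/2*x^2 - (m:ℝ)*((m:ℝ)+1)*((m:ℝ)+2)/6*x^3 with hq
  set p : ℝ := 1 + m*x + (m:ℝ)*((m:ℝ)-1)/2*x^2 + (m:ℝ)*((m:ℝ)-1)*((m:ℝ)-2)/6*x^3 with hp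
  have hqQ : |q| ≤ Q := by
    have h := WRaux_cubic_bound 1 (-(m:ℝ)) ((m:ℝ)*((m:ℝ)+1)/2) (-((m:ℝ)*((m:ℝ)+1)*((m:ℝ)+2)/6)) x hx1
    have e : q = 1 + (-(m:ℝ))*x + ((m:ℝ)*((m:ℝ)+1)/2)*x^2 + (-((m:ℝ)*((m:ℝ)+1)*((m:ℝ)+2)/6))*x^3 := by
      rw [hq]; ring
    rw [e, hQ]; exact h
  have hqp : q * p - 1 = x^4 * ((-((m:ℝ)^2*((m:ℝ)^2+11)/12)) + (-((m:ℝ)^2*((m:ℝ)^2-1)/3))*x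
      + (-((m:ℝ)^2*((m:ℝ)^2-1)*((m:ℝ)^2-4)/36))*x^2 + 0*x^3) := by rw [hq, hp]; ring
  have hrho : |(-((m:ℝ)^2*((m:ℝ)^2+11)/12)) + (-((m:ℝ)^2*((m:ℝ)^2-1)/3))*x
      + (-((m:ℝ)^2*((m:ℝ)^2-1)*((m:ℝ)^2-4)/36))*x^2 + 0*x^3| ≤ K := by
    have h := WRaux_cubic_bound (-((m:ℝ)^2*((m:ℝ)^2+11)/12)) (-((m:ℝ)^2*((m:ℝ)^2-1)/3))
      (-((m:ℝ)^2*((m:ℝ)^2-1)*((m:ℝ)^2-4)/36)) 0 x hx1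
    rw [hK]; exact h
  have hx4 : |x|^4 = x^4 := by
    rw [← abs_pow]; exact abs_of_nonneg (by positivity)
  have h1 : |q*p - 1| ≤ K * x^4 := by
    rw [hqp, abs_mul, abs_pow, hx4]
    calc x^4 * |(-((m:ℝ)^2*((m:ℝ)^2+11)/12)) + (-((m:ℝ)^2*((m:ℝ)^2-1)/3))*x
      + (-((m:ℝ)^2*((m:ℝ)^2-1)*((m:ℝ)^2-4)/36))*x^2 + 0*x^3|
        ≤ x^4 * K := by
          have : (0:ℝ) ≤ x^4 := by positivity
          exact mul_le_mul_of_nonneg_left hrho this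
      _ = K * x^4 := by ring
  have hbinom := WRaux_binom m x hx
  have hbinom' : |(1+x)^m - p| ≤ 2^(m+1) * x^4 := by rw [hp]; exact hbinom
  have h2 : |1 - q*(1+x)^m| ≤ (K + Q * 2^(m+1)) * x^4 := by
    have e : 1 - q*(1+x)^m = -(q*p - 1) - q*((1+x)^m - p) := by ring
    rw [e]
    calc |(-(q*p - 1)) - q*((1+x)^m - p)| ≤ |(-(q*p-1))| + |q*((1+x)^m - p)| := abs_sub _ _
      _ = |q*p-1| + |q| * |(1+x)^m - p| := by rw [abs_neg, abs_mul]
      _ ≤ K * x^4 + Q * (2^(m+1) * x^4) :=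
          add_le_add h1 (mul_le_mul hqQ hbinom' (abs_nonneg _) hQ0)
      _ = (K + Q * 2^(m+1)) * x^4 := by ring
  have e3 : 1/(1+x)^m - q = (1 - q*(1+x)^m)/(1+x)^m := by
    field_simp
  have hfin : |1/(1+x)^m - q| = |1 - q*(1+x)^m| / (1+x)^m := by
    rw [e3, abs_div, abs_of_pos hPpos]
  rw [hfin, div_eq_mul_one_div]
  calc |1 - q*(1+x)^m| * (1/(1+x)^m) ≤ ((K + Q*2^(m+1))*x^4) * 2^m :=
      mul_le_mul h2 hPinv (by positivity) (by positivity)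
    _ = 2^m * (K + Q*2^(m+1)) * x^4 := by ring

lemma WRaux_h (k : ℕ) : ∃ C : ℝ, 0 ≤ C ∧ ∀ x : ℝ, |x| ≤ 1/2 →
    |((1+x) - 1/(1+x)^(k+2))
      - (((k:ℝ)+3)*x - ((k:ℝ)+3)*((k:ℝ)+2)/2*x^2)| ≤ C * |x|^3 := by
  obtain ⟨C₁, hC₁0, hC₁⟩ := WRaux_inv (k+2)
  set m : ℝ := ((k:ℝ)+2) with hm
  have hm0 : 0 ≤ m := by positivity
  refine ⟨m*(m+1)*(m+2)/6 + C₁, by positivity, ?_⟩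
  intro x hx
  have h := hC₁ x hx
  have hcast : ((k+2:ℕ):ℝ) = m := by push_cast [hm]; ring
  rw [hcast] at h
  have e : ((1+x) - 1/(1+x)^(k+2)) - (((k:ℝ)+3)*x - ((k:ℝ)+3)*((k:ℝ)+2)/2*x^2)
      = -(1/(1+x)^(k+2) - (1 - m*x + m*(m+1)/2*x^2 - m*(m+1)*(m+2)/6*x^3))
        + (m*(m+1)*(m+2)/6)*x^3 := by
    rw [hm]; ring
  rw [e]
  have hx1 : |x| ≤ 1 := by linarith [abs_nonneg x]
  have hx4 : x^4 ≤ |x|^3 := by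
    have h1 : x^4 = |x|^4 := by rw [← abs_pow]; exact (abs_of_nonneg (by positivity)).symm
    rw [h1, pow_succ]
    calc |x|^3 * |x| ≤ |x|^3 * 1 := by gcongr
      _ = |x|^3 := by ring
  have habs : |m*(m+1)*(m+2)/6| = m*(m+1)*(m+2)/6 := by
    rw [abs_of_nonneg]; positivity
  calc |(-(1/(1+x)^(k+2) - (1 - m*x + m*(m+1)/2*x^2 - m*(m+1)*(m+2)/6*x^3)))
        + (m*(m+1)*(m+2)/6)*x^3|
      ≤ |(-(1/(1+x)^(k+2) - (1 - m*x + m*(m+1)/2*x^2 - m*(m+1)*(m+2)/6*x^3)))|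
        + |(m*(m+1)*(m+2)/6)*x^3| := abs_add_le _ _
    _ = |1/(1+x)^(k+2) - (1 - m*x + m*(m+1)/2*x^2 - m*(m+1)*(m+2)/6*x^3)|
        + (m*(m+1)*(m+2)/6) * |x|^3 := by
        rw [abs_neg, abs_mul, abs_pow, habs]
    _ ≤ C₁ * x^4 + (m*(m+1)*(m+2)/6) * |x|^3 := by gcongr
    _ ≤ C₁ * |x|^3 + (m*(m+1)*(m+2)/6) * |x|^3 := by gcongr
    _ = (m*(m+1)*(m+2)/6 + C₁) * |x|^3 := by ring

lemma WRaux_w (k : ℕ) : ∃ C : ℝ, 0 ≤ C ∧ ∀ x : ℝ, |x| ≤ 1/2 →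
    |((1+x) - 1/(1+x)^(k+2))^2
      - (((k:ℝ)+3)^2*x^2 - ((k:ℝ)+3)^2*((k:ℝ)+2)*x^3)| ≤ C * x^4 := by
  obtain ⟨C₁, hC₁0, hC₁⟩ := WRaux_h k
  refine ⟨(((k:ℝ)+3)*((k:ℝ)+2)/2)^2 + 2*(((k:ℝ)+3) + ((k:ℝ)+3)*((k:ℝ)+2)/2)*C₁ + C₁^2,
    by positivity, ?_⟩
  intro x hx
  have hx1 : |x| ≤ 1 := by linarith [abs_nonneg x]
  have he' := hC₁ x hx
  set a : ℝ := ((k:ℝ)+3)*x - ((k:ℝ)+3)*((k:ℝ)+2)/2*x^2 with ha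
  set e' : ℝ := ((1+x) - 1/(1+x)^(k+2)) - a with he'def
  have hae : |e'| ≤ C₁ * |x|^3 := he'
  have hsplit : ((1+x) - 1/(1+x)^(k+2))^2 - (((k:ℝ)+3)^2*x^2 - ((k:ℝ)+3)^2*((k:ℝ)+2)*x^3)
      = (((k:ℝ)+3)*((k:ℝ)+2)/2)^2*x^4 + 2*a*e' + e'^2 := by
    have h0 : (1+x) - 1/(1+x)^(k+2) = a + e' := by rw [he'def]; ring
    rw [h0, ha]; ring
  have haA : |a| ≤ (((k:ℝ)+3) + ((k:ℝ)+3)*((k:ℝ)+2)/2) * |x| := by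
    rw [ha]
    calc |((k:ℝ)+3)*x - ((k:ℝ)+3)*((k:ℝ)+2)/2*x^2|
        ≤ |((k:ℝ)+3)*x| + |((k:ℝ)+3)*((k:ℝ)+2)/2*x^2| := abs_sub _ _
      _ = ((k:ℝ)+3) * |x| + (((k:ℝ)+3)*((k:ℝ)+2)/2) * |x|^2 := by
          rw [abs_mul, abs_mul, abs_pow, abs_of_nonneg (by positivity : (0:ℝ) ≤ (k:ℝ)+3),
            abs_of_nonneg (by positivity : (0:ℝ) ≤ ((k:ℝ)+3)*((k:ℝ)+2)/2)]
      _ ≤ ((k:ℝ)+3) * |x| + (((k:ℝ)+3)*((k:ℝ)+2)/2) * |x| := by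
          have : |x|^2 ≤ |x| := by
            rw [pow_two]
            calc |x| * |x| ≤ 1 * |x| := by gcongr
              _ = |x| := by ring
          gcongr
      _ = (((k:ℝ)+3) + ((k:ℝ)+3)*((k:ℝ)+2)/2) * |x| := by ring
  have hx4 : |x|^4 = x^4 := by rw [← abs_pow]; exact abs_of_nonneg (by positivity)
  rw [hsplit]
  have t1 : |(((k:ℝ)+3)*((k:ℝ)+2)/2)^2*x^4| = (((k:ℝ)+3)*((k:ℝ)+2)/2)^2*x^4 := by
    rw [abs_of_nonneg]; positivity
  have t2 : |2*a*e'| ≤ 2*(((k:ℝ)+3) + ((k:ℝ)+3)*((k:ℝ)+2)/2)*C₁*x^4 := by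
    have h0 : |2*a*e'| = 2 * |a| * |e'| := by
      rw [abs_mul, abs_mul]; norm_num
    rw [h0]
    calc 2 * |a| * |e'| ≤ 2 * ((((k:ℝ)+3) + ((k:ℝ)+3)*((k:ℝ)+2)/2) * |x|) * (C₁ * |x|^3) := by
          gcongr
      _ = 2*(((k:ℝ)+3) + ((k:ℝ)+3)*((k:ℝ)+2)/2)*C₁*|x|^4 := by ring
      _ = 2*(((k:ℝ)+3) + ((k:ℝ)+3)*((k:ℝ)+2)/2)*C₁*x^4 := by rw [hx4]
  have t3 : |e'^2| ≤ C₁^2*x^4 := by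
    rw [abs_pow]
    calc |e'|^2 ≤ (C₁*|x|^3)^2 := by gcongr
      _ = C₁^2 * |x|^6 := by ring
      _ ≤ C₁^2 * |x|^4 :=
          mul_le_mul_of_nonneg_left
            (pow_le_pow_of_le_one (abs_nonneg x) hx1 (by norm_num)) (sq_nonneg C₁)
      _ = C₁^2 * x^4 := by rw [hx4]
  calc |(((k:ℝ)+3)*((k:ℝ)+2)/2)^2*x^4 + 2*a*e' + e'^2|
      ≤ |(((k:ℝ)+3)*((k:ℝ)+2)/2)^2*x^4 + 2*a*e'| + |e'^2| := abs_add_le _ _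
    _ ≤ |(((k:ℝ)+3)*((k:ℝ)+2)/2)^2*x^4| + |2*a*e'| + |e'^2| := by
        linarith [abs_add_le ((((k:ℝ)+3)*((k:ℝ)+2)/2)^2*x^4) (2*a*e')]
    _ ≤ (((k:ℝ)+3)*((k:ℝ)+2)/2)^2*x^4 + 2*(((k:ℝ)+3) + ((k:ℝ)+3)*((k:ℝ)+2)/2)*C₁*x^4 + C₁^2*x^4 := by
        rw [t1]; linarith
    _ = ((((k:ℝ)+3)*((k:ℝ)+2)/2)^2 + 2*(((k:ℝ)+3) + ((k:ℝ)+3)*((k:ℝ)+2)/2)*C₁ + C₁^2) * x^4 := by ring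

lemma WRaux_G (k : ℕ) : ∃ C : ℝ, 0 ≤ C ∧ ∀ x : ℝ, |x| ≤ 1/2 →
    |(x + x^2/2 + (1/(1+x)^(k+1) - 1)/((k:ℝ)+1))
      - (((k:ℝ)+3)/2*x^2 - ((k:ℝ)+3)*((k:ℝ)+2)/6*x^3)| ≤ C * x^4 := by
  obtain ⟨C₁, hC₁0, hC₁⟩ := WRaux_inv (k+1)
  refine ⟨C₁, hC₁0, ?_⟩
  intro x hx
  have h := hC₁ x hx
  have hcast : ((k+1:ℕ):ℝ) = (k:ℝ)+1 := by push_cast; ring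
  rw [hcast] at h
  have hk1 : (0:ℝ) < (k:ℝ)+1 := by positivity
  have e : (x + x^2/2 + (1/(1+x)^(k+1) - 1)/((k:ℝ)+1))
      - (((k:ℝ)+3)/2*x^2 - ((k:ℝ)+3)*((k:ℝ)+2)/6*x^3)
      = (1/(1+x)^(k+1) - (1 - ((k:ℝ)+1)*x + ((k:ℝ)+1)*(((k:ℝ)+1)+1)/2*x^2
          - ((k:ℝ)+1)*(((k:ℝ)+1)+1)*(((k:ℝ)+1)+2)/6*x^3))/((k:ℝ)+1) := by
    field_simp
    ring
  rw [e, abs_div, abs_of_pos hk1]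
  rw [div_le_iff₀ hk1]
  calc |1/(1+x)^(k+1) - (1 - ((k:ℝ)+1)*x + ((k:ℝ)+1)*(((k:ℝ)+1)+1)/2*x^2
          - ((k:ℝ)+1)*(((k:ℝ)+1)+1)*(((k:ℝ)+1)+2)/6*x^3)| ≤ C₁ * x^4 := h
    _ ≤ C₁ * x^4 * ((k:ℝ)+1) := by
        nlinarith [mul_nonneg hC₁0 (pow_nonneg (sq_nonneg x) 2), sq_nonneg (x^2)]

lemma WRaux_cube_sqrt (v b M d : ℝ) (hv : 0 ≤ v) (hb : 0 ≤ b) (hvb : |v - b| ≤ d)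
    (hMv : Real.sqrt v ≤ M) (hMb : Real.sqrt b ≤ M) :
    |v * Real.sqrt v - b * Real.sqrt b| ≤ 2 * M * d := by
  have ha0 : 0 ≤ Real.sqrt v := Real.sqrt_nonneg v
  have hc0 : 0 ≤ Real.sqrt b := Real.sqrt_nonneg b
  have hM0 : 0 ≤ M := le_trans ha0 hMv
  have hd0 : 0 ≤ d := le_trans (abs_nonneg _) hvb
  obtain ⟨a, hav, ha0'⟩ : ∃ a, a = Real.sqrt v ∧ 0 ≤ a := ⟨_, rfl, ha0⟩
  obtain ⟨c, hbc, hc0'⟩ : ∃ c, c = Real.sqrt b ∧ 0 ≤ c := ⟨_, rfl, hc0⟩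
  rw [← hav, ← hbc]
  rw [← hav] at hMv
  rw [← hbc] at hMb
  have hva : v = a^2 := by rw [hav]; exact (Real.sq_sqrt hv).symm
  have hbb : b = c^2 := by rw [hbc]; exact (Real.sq_sqrt hb).symm
  have e1 : v * a - b * c = (a - c) * (a^2 + a*c + c^2) := by rw [hva, hbb]; ring
  have e2 : |(a-c)*(a+c)| = |v - b| := by
    rw [show (a-c)*(a+c) = a^2 - c^2 from by ring, ← hva, ← hbb]
  have hac2 : a^2 + a*c + c^2 ≤ (a+c)*(a+c) := by nlinarith [mul_nonneg ha0' hc0']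
  have hacM : a + c ≤ 2*M := by linarith
  rcases eq_or_lt_of_le (add_nonneg ha0' hc0') with h0 | h0
  · have ha : a = 0 := by linarith
    have hc : c = 0 := by linarith
    rw [e1, ha, hc]
    norm_num
    exact mul_nonneg (mul_nonneg (by norm_num) hM0) hd0
  · calc |v*a - b*c| = |a-c| * (a^2 + a*c + c^2) := by
          rw [e1, abs_mul, abs_of_nonneg (by nlinarith [sq_nonneg (a+c)] : (0:ℝ) ≤ a^2+a*c+c^2)]
      _ ≤ |a-c| * ((a+c)*(a+c)) := by gcongr
      _ = (|a-c| * (a+c)) * (a+c) := by ring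
      _ = |v-b| * (a+c) := by
          rw [← e2, abs_mul, abs_of_pos h0]
      _ ≤ d * (2*M) := by gcongr
      _ = 2*M*d := by ring

noncomputable def WRuF (n : ℕ) (R r : ℝ) : ℝ := (1 - r^2)/2 - R^n/(((n:ℝ)-2)*r^(n-2))

lemma WRaux_key (n : ℕ) (hn : 3 ≤ n) (R : ℝ) (hR0 : 0 < R) :
    ∃ C s₀ : ℝ, 0 ≤ C ∧ 0 < s₀ ∧ s₀ ≤ R/2 ∧ ∀ r : ℝ, |r - R| ≤ s₀ →
      ((n:ℝ)/4)*(r-R)^2 ≤ WRuF n R R - WRuF n R r ∧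
      WRuF n R R - WRuF n R r ≤ (n:ℝ)*(r-R)^2 ∧
      (R ≤ r → |((r^n - R^n)/r^(n-1))^2 - (2*(n:ℝ)*(WRuF n R R - WRuF n R r)
        - (4*((n:ℝ)-1)*Real.sqrt (2*(n:ℝ))/(3*R))*(WRuF n R R - WRuF n R r)
          *Real.sqrt (WRuF n R R - WRuF n R r))|
        ≤ C * (WRuF n R R - WRuF n R r)^2) ∧
      (r ≤ R → |((r^n - R^n)/r^(n-1))^2 - (2*(n:ℝ)*(WRuF n R R - WRuF n R r)
        + (4*((n:ℝ)-1)*Real.sqrt (2*(n:ℝ))/(3*R))*(WRuF n R R - WRuF n R r)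
          *Real.sqrt (WRuF n R R - WRuF n R r))|
        ≤ C * (WRuF n R R - WRuF n R r)^2) := by
  obtain ⟨k, rfl⟩ : ∃ k, n = k + 3 := ⟨n - 3, by omega⟩
  obtain ⟨Cw, hCw0, hCw⟩ := WRaux_w k
  obtain ⟨CG, hCG0, hCG⟩ := WRaux_G k
  obtain ⟨nr, hnr⟩ : ∃ y:ℝ, y = (k:ℝ)+3 := ⟨_, rfl⟩
  have hk0 : (0:ℝ) ≤ (k:ℝ) := Nat.cast_nonneg k
  have hnr3 : (3:ℝ) ≤ nr := by rw [hnr]; linarith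
  have hnr0 : (0:ℝ) < nr := by linarith
  have hk2 : ((k:ℝ)+2) = nr - 1 := by rw [hnr]; ring
  rw [← hnr] at hCw hCG
  rw [hk2] at hCw hCG
  obtain ⟨B, hB⟩ : ∃ y:ℝ, y = nr*(nr-1)/6 + CG := ⟨_, rfl⟩
  have hB0 : 0 ≤ B := by rw [hB]; nlinarith
  obtain ⟨ε, hε⟩ : ∃ y:ℝ, y = (nr/4)/(B+1) := ⟨_, rfl⟩
  have hε0 : 0 < ε := by rw [hε]; apply div_pos <;> linarith
  obtain ⟨x₁, hx₁⟩ : ∃ y:ℝ, y = min (1/2) ε := ⟨_, rfl⟩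
  have hx₁0 : 0 < x₁ := by rw [hx₁]; exact lt_min (by norm_num) hε0
  have hx₁half : x₁ ≤ 1/2 := by rw [hx₁]; exact min_le_left _ _
  have hx₁ε : x₁ ≤ ε := by rw [hx₁]; exact min_le_right _ _
  have hRne : R ≠ 0 := ne_of_gt hR0
  obtain ⟨cc, hcc⟩ : ∃ y:ℝ, y = 4*(nr-1)*Real.sqrt (2*nr)/(3*R) := ⟨_, rfl⟩
  have hcc0 : 0 ≤ cc := by
    rw [hcc]
    apply div_nonneg
    · apply mul_nonneg (by linarith) (Real.sqrt_nonneg _)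
    · linarith
  obtain ⟨C₇, hC₇⟩ : ∃ y:ℝ, y = R^2*(Cw + 2*nr*CG) + cc*(2*(Real.sqrt nr * R))*(R^2*B) :=
    ⟨_, rfl⟩
  have hC₇0 : 0 ≤ C₇ := by
    rw [hC₇]
    apply add_nonneg
    · apply mul_nonneg (sq_nonneg R)
      apply add_nonneg hCw0
      apply mul_nonneg (by linarith) hCG0
    · apply mul_nonneg
      apply mul_nonneg hcc0
      · apply mul_nonneg (by norm_num) (mul_nonneg (Real.sqrt_nonneg _) hR0.le)
      · exact mul_nonneg (sq_nonneg R) hB0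
  refine ⟨C₇*(4/(nr*R^2))^2, R*x₁, mul_nonneg hC₇0 (sq_nonneg _), mul_pos hR0 hx₁0, ?_, ?_⟩
  · calc R * x₁ ≤ R * (1/2) := by gcongr
      _ = R/2 := by ring
  intro r hr
  push_cast
  rw [← hnr]
  -- basic setup
  obtain ⟨x, hxdef⟩ : ∃ y:ℝ, y = r/R - 1 := ⟨_, rfl⟩
  have hrR : r - R = R*x := by rw [hxdef]; field_simp
  have hxabs : |x| ≤ x₁ := by
    have h1 : |r - R| = R * |x| := by rw [hrR, abs_mul, abs_of_pos hR0]
    rw [h1] at hr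
    exact le_of_mul_le_mul_left hr hR0
  have hxhalf : |x| ≤ 1/2 := le_trans hxabs hx₁half
  have hxε : |x| ≤ ε := le_trans hxabs hx₁ε
  have hxle := abs_le.1 hxhalf
  have hx1pos : (0:ℝ) < 1 + x := by linarith [hxle.1]
  have hr0 : 0 < r := by
    have he : r = R*(1+x) := by rw [hxdef]; field_simp; ring
    rw [he]; exact mul_pos hR0 hx1pos
  have hrne : r ≠ 0 := ne_of_gt hr0
  have hk1 : ((k:ℝ)+1) ≠ 0 := by positivity
  obtain ⟨Gx, hGxdef⟩ : ∃ y:ℝ, y = x + x^2/2 + (1/(1+x)^(k+1) - 1)/((k:ℝ)+1) := ⟨_, rfl⟩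
  obtain ⟨hfn, hhfn⟩ : ∃ y:ℝ, y = (1+x) - 1/(1+x)^(k+2) := ⟨_, rfl⟩
  -- identity E1
  have E1 : WRuF (k+3) R R - WRuF (k+3) R r = R^2 * Gx := by
    rw [hGxdef, hxdef]
    have hRk : R^(k+1) ≠ 0 := pow_ne_zero _ hRne
    have hrk : r^(k+1) ≠ 0 := pow_ne_zero _ hrne
    simp only [WRuF]
    rw [show k+3-2 = k+1 from by omega]
    rw [show 1 + (r/R - 1) = r/R from by ring, div_pow, one_div_div]
    push_cast
    rw [show ((k:ℝ)+3)-2 = (k:ℝ)+1 from by ring]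
    field_simp
    ring
  -- identity E2
  have E2 : (r^(k+3) - R^(k+3))/r^(k+2) = R * hfn := by
    rw [hhfn, hxdef]
    have hRk : R^(k+2) ≠ 0 := pow_ne_zero _ hRne
    have hrk : r^(k+2) ≠ 0 := pow_ne_zero _ hrne
    rw [show 1 + (r/R - 1) = r/R from by ring, div_pow, one_div_div]
    field_simp
    ring
  have hGbound := hCG x hxhalf
  have hwbound := hCw x hxhalf
  rw [← hGxdef] at hGbound
  rw [← hhfn] at hwbound
  -- powers of |x|
  have hxsq : |x|^2 = x^2 := by rw [← abs_pow]; exact abs_of_nonneg (by positivity)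
  have hx4 : |x|^4 = x^4 := by rw [← abs_pow]; exact abs_of_nonneg (by positivity)
  have hx3abs : |x^3| = |x|^3 := by rw [← abs_pow]
  have hx43 : x^4 ≤ |x|^3 := by
    rw [← hx4, pow_succ]
    calc |x|^3 * |x| ≤ |x|^3 * 1 := by
          gcongr
          linarith
      _ = |x|^3 := by ring
  have hx32 : |x|^3 ≤ ε * x^2 := by
    calc |x|^3 = |x| * x^2 := by rw [← hxsq]; ring
      _ ≤ ε * x^2 := mul_le_mul_of_nonneg_right hxε (sq_nonneg x)
  have habs3 : |nr*(nr-1)/6*x^3| = nr*(nr-1)/6*|x|^3 := by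
    rw [abs_mul, hx3abs, abs_of_nonneg (by nlinarith : (0:ℝ) ≤ nr*(nr-1)/6)]
  -- core smallness
  have hcore : |nr*(nr-1)/6*x^3| + CG*x^4 ≤ (nr/4)*x^2 := by
    have h2 : CG*x^4 ≤ CG*|x|^3 := by gcongr
    have h4 : B * |x|^3 ≤ B * (ε * x^2) := by gcongr
    have hB1 : (0:ℝ) < B + 1 := by linarith
    have h5 : B * ε ≤ nr/4 := by
      calc B * ε = B*(nr/4)/(B+1) := by rw [hε]; ring
        _ ≤ nr/4 := by
            rw [div_le_iff₀ hB1]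
            linarith [mul_nonneg hB0 hnr0.le]
    have h6 : B * (ε * x^2) ≤ (nr/4) * x^2 := by
      calc B * (ε * x^2) = (B*ε) * x^2 := by ring
        _ ≤ (nr/4) * x^2 := mul_le_mul_of_nonneg_right h5 (sq_nonneg x)
    calc |nr*(nr-1)/6*x^3| + CG*x^4 ≤ nr*(nr-1)/6*|x|^3 + CG*|x|^3 := by
          rw [habs3]; linarith
      _ = B * |x|^3 := by rw [hB]; ring
      _ ≤ (nr/4)*x^2 := le_trans h4 h6
  -- bounds on Gx
  have hGlow : nr/4*x^2 ≤ Gx := by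
    have h := abs_le.1 hGbound
    have h4 := le_abs_self (nr*(nr-1)/6*x^3)
    linarith [h.1]
  have hGhigh : Gx ≤ nr*x^2 := by
    have h := abs_le.1 hGbound
    have h3 := neg_abs_le (nr*(nr-1)/6*x^3)
    have h5 : 0 ≤ nr * x^2 := mul_nonneg hnr0.le (sq_nonneg x)
    linarith [h.2]
  have hv0 : 0 ≤ R^2 * Gx := by
    have h1 := mul_le_mul_of_nonneg_left hGlow (sq_nonneg R)
    have h2 : 0 ≤ R^2*(nr/4*x^2) :=
      mul_nonneg (sq_nonneg R) (mul_nonneg (by linarith) (sq_nonneg x))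
    linarith
  -- shared machinery for the sqrt estimates
  obtain ⟨b, hb⟩ : ∃ y:ℝ, y = nr/2*R^2*x^2 := ⟨_, rfl⟩
  have hb0 : 0 ≤ b := by
    rw [hb]; exact mul_nonneg (mul_nonneg (by linarith) (sq_nonneg R)) (sq_nonneg x)
  have hGmid : |Gx - nr/2*x^2| ≤ B*|x|^3 := by
    have e : Gx - nr/2*x^2
        = (Gx - (nr/2*x^2 - nr*(nr-1)/6*x^3)) + (-(nr*(nr-1)/6*x^3)) := by ring
    rw [e]
    calc |(Gx - (nr/2*x^2 - nr*(nr-1)/6*x^3)) + (-(nr*(nr-1)/6*x^3))|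
        ≤ |Gx - (nr/2*x^2 - nr*(nr-1)/6*x^3)| + |(-(nr*(nr-1)/6*x^3))| := abs_add_le _ _
      _ = |Gx - (nr/2*x^2 - nr*(nr-1)/6*x^3)| + nr*(nr-1)/6*|x|^3 := by
          rw [abs_neg, habs3]
      _ ≤ CG*x^4 + nr*(nr-1)/6*|x|^3 := by linarith [hGbound]
      _ ≤ CG*|x|^3 + nr*(nr-1)/6*|x|^3 := by
          linarith [mul_le_mul_of_nonneg_left hx43 hCG0]
      _ = B*|x|^3 := by rw [hB]; ring
  have hvb : |R^2*Gx - b| ≤ R^2*B*|x|^3 := by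
    rw [hb, show R^2*Gx - nr/2*R^2*x^2 = R^2*(Gx - nr/2*x^2) from by ring,
      abs_mul, abs_of_nonneg (sq_nonneg R)]
    calc R^2*|Gx - nr/2*x^2| ≤ R^2*(B*|x|^3) := mul_le_mul_of_nonneg_left hGmid (sq_nonneg R)
      _ = R^2*B*|x|^3 := by ring
  have hRx0 : 0 ≤ R*|x| := mul_nonneg hR0.le (abs_nonneg x)
  have hMv : Real.sqrt (R^2*Gx) ≤ Real.sqrt nr*R*|x| := by
    have h1 : R^2*Gx ≤ nr*(R*|x|)^2 := by
      rw [show (R*|x|)^2 = R^2*x^2 from by rw [mul_pow, hxsq]]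
      calc R^2*Gx ≤ R^2*(nr*x^2) := mul_le_mul_of_nonneg_left hGhigh (sq_nonneg R)
        _ = nr*(R^2*x^2) := by ring
    calc Real.sqrt (R^2*Gx) ≤ Real.sqrt (nr*(R*|x|)^2) := Real.sqrt_le_sqrt h1
      _ = Real.sqrt nr * (R*|x|) := by
          rw [Real.sqrt_mul hnr0.le, Real.sqrt_sq hRx0]
      _ = Real.sqrt nr*R*|x| := by ring
  have hsqrtb : Real.sqrt b = Real.sqrt (nr/2) * (R*|x|) := by
    rw [hb, show nr/2*R^2*x^2 = (nr/2)*(R*|x|)^2 from by rw [mul_pow, hxsq]; ring,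
      Real.sqrt_mul (by linarith : (0:ℝ) ≤ nr/2), Real.sqrt_sq hRx0]
  have hMb : Real.sqrt b ≤ Real.sqrt nr*R*|x| := by
    rw [hsqrtb]
    calc Real.sqrt (nr/2)*(R*|x|) ≤ Real.sqrt nr*(R*|x|) :=
          mul_le_mul_of_nonneg_right (Real.sqrt_le_sqrt (by linarith)) hRx0
      _ = Real.sqrt nr*R*|x| := by ring
  have hcube := WRaux_cube_sqrt (R^2*Gx) b (Real.sqrt nr*R*|x|) (R^2*B*|x|^3) hv0 hb0 hvb hMv hMb
  have hcube' : |(R^2*Gx)*Real.sqrt (R^2*Gx) - b*Real.sqrt b|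
      ≤ 2*(Real.sqrt nr*R)*(R^2*B)*x^4 := by
    refine le_trans hcube ?_
    rw [show 2*(Real.sqrt nr*R*|x|)*(R^2*B*|x|^3) = 2*(Real.sqrt nr*R)*(R^2*B)*|x|^4 from by ring,
      hx4]
  have hprod : Real.sqrt (2*nr) * Real.sqrt (nr/2) = nr := by
    rw [← Real.sqrt_mul (by linarith : (0:ℝ) ≤ 2*nr),
      show 2*nr*(nr/2) = nr^2 from by ring, Real.sqrt_sq hnr0.le]
  have hbval : cc*(b*Real.sqrt b) = 2/3*nr^2*(nr-1)*R^2*(x^2*|x|) := by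
    rw [hcc, hsqrtb, hb,
      show 4*(nr-1)*Real.sqrt (2*nr)/(3*R)*(nr/2*R^2*x^2*(Real.sqrt (nr/2)*(R*|x|)))
        = (Real.sqrt (2*nr)*Real.sqrt (nr/2))*(4*(nr-1)*(nr/2)*(R^2*R/(3*R))*(x^2*|x|)) from by
          ring, hprod]
    field_simp
    ring
  have hmain : |hfn^2 - 2*nr*Gx + 2/3*nr^2*(nr-1)*x^3| ≤ (Cw + 2*nr*CG)*x^4 := by
    have e : hfn^2 - 2*nr*Gx + 2/3*nr^2*(nr-1)*x^3
        = (hfn^2 - (nr^2*x^2 - nr^2*(nr-1)*x^3))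
          - 2*nr*(Gx - (nr/2*x^2 - nr*(nr-1)/6*x^3)) := by ring
    rw [e]
    calc |(hfn^2 - (nr^2*x^2 - nr^2*(nr-1)*x^3))
          - 2*nr*(Gx - (nr/2*x^2 - nr*(nr-1)/6*x^3))|
        ≤ |hfn^2 - (nr^2*x^2 - nr^2*(nr-1)*x^3)|
          + |2*nr*(Gx - (nr/2*x^2 - nr*(nr-1)/6*x^3))| := abs_sub _ _
      _ = |hfn^2 - (nr^2*x^2 - nr^2*(nr-1)*x^3)|
          + 2*nr*|Gx - (nr/2*x^2 - nr*(nr-1)/6*x^3)| := by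
          rw [abs_mul, abs_of_nonneg (by linarith : (0:ℝ) ≤ 2*nr)]
      _ ≤ Cw*x^4 + 2*nr*(CG*x^4) := by
          refine add_le_add hwbound (mul_le_mul_of_nonneg_left hGbound (by linarith))
      _ = (Cw + 2*nr*CG)*x^4 := by ring
  have hnrR2 : nr*R^2 ≠ 0 := by positivity
  have hx4v : C₇*x^4 ≤ C₇*(4/(nr*R^2))^2*(R^2*Gx)^2 := by
    have hlow2 : nr/4*R^2*x^2 ≤ R^2*Gx := by
      calc nr/4*R^2*x^2 = R^2*(nr/4*x^2) := by ring
        _ ≤ R^2*Gx := mul_le_mul_of_nonneg_left hGlow (sq_nonneg R)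
    have h0 : 0 ≤ nr/4*R^2*x^2 :=
      mul_nonneg (mul_nonneg (by linarith) (sq_nonneg R)) (sq_nonneg x)
    have h7 : (nr/4*R^2*x^2)^2 ≤ (R^2*Gx)^2 := pow_le_pow_left₀ h0 hlow2 2
    have e : (4/(nr*R^2))^2*(nr/4*R^2*x^2)^2 = x^4 := by
      rw [← mul_pow, show 4/(nr*R^2)*(nr/4*R^2*x^2) = x^2 from by field_simp]
      ring
    calc C₇*x^4 = C₇*((4/(nr*R^2))^2*(nr/4*R^2*x^2)^2) := by rw [e]
      _ ≤ C₇*((4/(nr*R^2))^2*(R^2*Gx)^2) := by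
          exact mul_le_mul_of_nonneg_left
            (mul_le_mul_of_nonneg_left h7 (sq_nonneg _)) hC₇0
      _ = C₇*(4/(nr*R^2))^2*(R^2*Gx)^2 := by ring
  refine ⟨?_, ?_, ?_, ?_⟩
  · -- lower bound
    rw [E1, hrR]
    calc nr/4*(R*x)^2 = R^2*(nr/4*x^2) := by ring
      _ ≤ R^2*Gx := mul_le_mul_of_nonneg_left hGlow (sq_nonneg R)
  · -- upper bound
    rw [E1, hrR]
    calc R^2*Gx ≤ R^2*(nr*x^2) := mul_le_mul_of_nonneg_left hGhigh (sq_nonneg R)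
      _ = nr*(R*x)^2 := by ring
  · -- R ≤ r case
    intro hRr
    have hx0 : 0 ≤ x := by
      rw [hxdef]
      have h1 : 1 ≤ r/R := (one_le_div hR0).mpr hRr
      linarith
    have hxeq : |x| = x := abs_of_nonneg hx0
    rw [E2, E1]
    have hbval' : cc*(b*Real.sqrt b) = 2/3*nr^2*(nr-1)*R^2*x^3 := by
      rw [hbval, hxeq]; ring
    have esplit : (R*hfn)^2 - (2*nr*(R^2*Gx)
          - 4*(nr-1)*Real.sqrt (2*nr)/(3*R)*(R^2*Gx)*Real.sqrt (R^2*Gx))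
        = R^2*(hfn^2 - 2*nr*Gx + 2/3*nr^2*(nr-1)*x^3)
          + cc*((R^2*Gx)*Real.sqrt (R^2*Gx) - b*Real.sqrt b) := by
      rw [mul_sub cc, hbval', hcc]; ring
    rw [esplit]
    calc |R^2*(hfn^2 - 2*nr*Gx + 2/3*nr^2*(nr-1)*x^3)
          + cc*((R^2*Gx)*Real.sqrt (R^2*Gx) - b*Real.sqrt b)|
        ≤ |R^2*(hfn^2 - 2*nr*Gx + 2/3*nr^2*(nr-1)*x^3)|
          + |cc*((R^2*Gx)*Real.sqrt (R^2*Gx) - b*Real.sqrt b)| := abs_add_le _ _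
      _ = R^2*|hfn^2 - 2*nr*Gx + 2/3*nr^2*(nr-1)*x^3|
          + cc*|(R^2*Gx)*Real.sqrt (R^2*Gx) - b*Real.sqrt b| := by
          rw [abs_mul, abs_mul, abs_of_nonneg (sq_nonneg R), abs_of_nonneg hcc0]
      _ ≤ R^2*((Cw + 2*nr*CG)*x^4) + cc*(2*(Real.sqrt nr*R)*(R^2*B)*x^4) :=
          add_le_add (mul_le_mul_of_nonneg_left hmain (sq_nonneg R))
            (mul_le_mul_of_nonneg_left hcube' hcc0)
      _ = C₇*x^4 := by rw [hC₇]; ring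
      _ ≤ C₇*(4/(nr*R^2))^2*(R^2*Gx)^2 := hx4v
  · -- r ≤ R case
    intro hrR
    have hx0 : x ≤ 0 := by
      rw [hxdef]
      have h1 : r/R ≤ 1 := (div_le_one hR0).mpr hrR
      linarith
    have hxeq : |x| = -x := abs_of_nonpos hx0
    rw [E2, E1]
    have hbval' : cc*(b*Real.sqrt b) = -(2/3*nr^2*(nr-1)*R^2*x^3) := by
      rw [hbval, hxeq]; ring
    have esplit : (R*hfn)^2 - (2*nr*(R^2*Gx)
          + 4*(nr-1)*Real.sqrt (2*nr)/(3*R)*(R^2*Gx)*Real.sqrt (R^2*Gx))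
        = R^2*(hfn^2 - 2*nr*Gx + 2/3*nr^2*(nr-1)*x^3)
          - cc*((R^2*Gx)*Real.sqrt (R^2*Gx) - b*Real.sqrt b) := by
      rw [mul_sub cc, hbval', hcc]; ring
    rw [esplit]
    calc |R^2*(hfn^2 - 2*nr*Gx + 2/3*nr^2*(nr-1)*x^3)
          - cc*((R^2*Gx)*Real.sqrt (R^2*Gx) - b*Real.sqrt b)|
        ≤ |R^2*(hfn^2 - 2*nr*Gx + 2/3*nr^2*(nr-1)*x^3)|
          + |cc*((R^2*Gx)*Real.sqrt (R^2*Gx) - b*Real.sqrt b)| := abs_sub _ _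
      _ = R^2*|hfn^2 - 2*nr*Gx + 2/3*nr^2*(nr-1)*x^3|
          + cc*|(R^2*Gx)*Real.sqrt (R^2*Gx) - b*Real.sqrt b| := by
          rw [abs_mul, abs_mul, abs_of_nonneg (sq_nonneg R), abs_of_nonneg hcc0]
      _ ≤ R^2*((Cw + 2*nr*CG)*x^4) + cc*(2*(Real.sqrt nr*R)*(R^2*B)*x^4) :=
          add_le_add (mul_le_mul_of_nonneg_left hmain (sq_nonneg R))
            (mul_le_mul_of_nonneg_left hcube' hcc0)
      _ = C₇*x^4 := by rw [hC₇]; ring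
      _ ≤ C₇*(4/(nr*R^2))^2*(R^2*Gx)^2 := hx4v

lemma WRuF_RR (n : ℕ) (hn : 3 ≤ n) (R : ℝ) (hR0 : 0 < R) :
    WRuF n R R = (1 - n*R^2/((n:ℝ)-2))/2 := by
  obtain ⟨k, rfl⟩ : ∃ k, n = k + 3 := ⟨n - 3, by omega⟩
  have hRne : R ≠ 0 := ne_of_gt hR0
  have hRk : R^(k+1) ≠ 0 := pow_ne_zero _ hRne
  simp only [WRuF]
  rw [show k+3-2 = k+1 from by omega]
  push_cast
  rw [show ((k:ℝ)+3)-2 = (k:ℝ)+1 from by ring]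
  have hk1 : ((k:ℝ)+1) ≠ 0 := by positivity
  field_simp
  ring

lemma WRuF_hasDeriv (n : ℕ) (hn : 3 ≤ n) (R r : ℝ) (hr : r ≠ 0) :
    HasDerivAt (WRuF n R) (-r + R^n/r^(n-1)) r := by
  obtain ⟨k, rfl⟩ : ∃ k, n = k + 3 := ⟨n - 3, by omega⟩
  have hrk : r^(k+1) ≠ 0 := pow_ne_zero _ hr
  have hk1 : ((k:ℝ)+1) ≠ 0 := by positivity
  have h1 : HasDerivAt (fun y:ℝ => (1 - y^2)/2) (-r) r := by
    have h := ((hasDerivAt_pow 2 r).const_sub 1).div_const 2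
    exact h.congr_deriv (by norm_num; ring)
  have h2 : HasDerivAt (fun y:ℝ => ((↑(k+3):ℝ)-2)*y^(k+1))
      ((((k+3:ℕ):ℝ)-2)*((↑(k+1):ℝ)*r^k)) r := by
    have h := (hasDerivAt_pow (k+1) r).const_mul (((k+3:ℕ):ℝ)-2)
    exact h.congr_deriv (by simp)
  have hne2 : (((k+3:ℕ):ℝ)-2)*r^(k+1) ≠ 0 := by
    apply mul_ne_zero _ hrk
    push_cast
    intro h; nlinarith [Nat.cast_nonneg (α:=ℝ) k]
  have h3 := (hasDerivAt_const r (R^(k+3))).div h2 hne2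
  have h4 := h1.sub h3
  have h5 : HasDerivAt (WRuF (k+3) R)
      (-r - (0*((((k+3:ℕ):ℝ)-2)*r^(k+1)) - R^(k+3)*((((k+3:ℕ):ℝ)-2)*((↑(k+1):ℝ)*r^k)))
        /((((k+3:ℕ):ℝ)-2)*r^(k+1))^2) r := by
    have : WRuF (k+3) R = fun y:ℝ => (1 - y^2)/2 - R^(k+3)/(((↑(k+3):ℝ)-2)*y^(k+1)) := by
      funext y
      simp only [WRuF]
      rw [show k+3-2 = k+1 from by omega]
    rw [this]
    exact h4
  convert h5 using 1
  rw [show k+3-1 = k+2 from by omega]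
  push_cast
  rw [show ((k:ℝ)+3)-2 = (k:ℝ)+1 from by ring]
  have hrk2 : r^(k+2) ≠ 0 := pow_ne_zero _ hr
  field_simp
  ring

lemma WRuF_anti (n : ℕ) (hn : 3 ≤ n) (R : ℝ) (hR0 : 0 < R) :
    StrictAntiOn (WRuF n R) (Ici R) := by
  apply strictAntiOn_of_deriv_neg (convex_Ici R)
  · intro y hy
    have hy0 : y ≠ 0 := ne_of_gt (lt_of_lt_of_le hR0 hy)
    exact (WRuF_hasDeriv n hn R y hy0).continuousAt.continuousWithinAt
  · intro y hy
    rw [interior_Ici] at hy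
    have hRy : R < y := hy
    have hy0 : 0 < y := lt_trans hR0 hRy
    rw [(WRuF_hasDeriv n hn R y (ne_of_gt hy0)).deriv]
    have hpow : R^n < y^n := pow_lt_pow_left₀ hRy hR0.le (by omega)
    have hyy : y*y^(n-1) = y^n := by
      rw [← pow_succ']
      congr 1
      omega
    have h2 : R^n/y^(n-1) < y := by
      rw [div_lt_iff₀ (pow_pos hy0 (n-1))]
      rw [mul_comm] at hyy ⊢
      rw [hyy]
      exact hpow
    linarith

lemma WRuF_mono (n : ℕ) (hn : 3 ≤ n) (R : ℝ) (hR0 : 0 < R) :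
    StrictMonoOn (WRuF n R) (Ioc 0 R) := by
  apply strictMonoOn_of_deriv_pos (convex_Ioc 0 R)
  · intro y hy
    exact (WRuF_hasDeriv n hn R y (ne_of_gt hy.1)).continuousAt.continuousWithinAt
  · intro y hy
    rw [interior_Ioc] at hy
    have hy0 : 0 < y := hy.1
    have hyR : y < R := hy.2
    rw [(WRuF_hasDeriv n hn R y (ne_of_gt hy0)).deriv]
    have hpow : y^n < R^n := pow_lt_pow_left₀ hyR hy0.le (by omega)
    have hyy : y*y^(n-1) = y^n := by
      rw [← pow_succ']
      congr 1
      omega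
    have h2 : y < R^n/y^(n-1) := by
      rw [lt_div_iff₀ (pow_pos hy0 (n-1))]
      rw [hyy]
      exact hpow
    linarith

/-- expansion of `W_R = ((Ψⁿ - Rⁿ)/Ψ^{n-1})²` near the maximum:
`W_R = 2n(u_max - u) ∓ (4(n-1)√(2n)/(3R))(u_max - u)^{3/2} + O((u_max - u)²)`,
with the minus sign for `Ψ = ψ₊` and the plus sign for `Ψ = ψ₋`; in particular
`W_R/(u_max - u) → 2n`. Here `t` plays the role of the value `u`. -/
theorem WR_expansion (n : ℕ) (hn : 3 ≤ n) (R : ℝ)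
    (hR0 : 0 < R) (hRmax : R < Real.sqrt (((n : ℝ) - 2) / n))
    (r₁ r₂ : ℝ) (hr₁0 : 0 < r₁) (hr₁R : r₁ < R) (hRr₂ : R < r₂)
    (hz₁ : 1 - r₁ ^ 2 - 2 * R ^ n / (((n : ℝ) - 2) * r₁ ^ (n - 2)) = 0)
    (hz₂ : 1 - r₂ ^ 2 - 2 * R ^ n / (((n : ℝ) - 2) * r₂ ^ (n - 2)) = 0)
    (ψm ψp : ℝ → ℝ)
    (hψm : ∀ t ∈ Icc (0 : ℝ) ((1 - n * R ^ 2 / ((n : ℝ) - 2)) / 2),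
      ψm t ∈ Icc r₁ R ∧
        (1 - (ψm t) ^ 2) / 2 - R ^ n / (((n : ℝ) - 2) * (ψm t) ^ (n - 2)) = t)
    (hψp : ∀ t ∈ Icc (0 : ℝ) ((1 - n * R ^ 2 / ((n : ℝ) - 2)) / 2),
      ψp t ∈ Icc R r₂ ∧
        (1 - (ψp t) ^ 2) / 2 - R ^ n / (((n : ℝ) - 2) * (ψp t) ^ (n - 2)) = t) :
    (∃ C δ : ℝ, 0 < δ ∧ ∀ t : ℝ,
      (1 - n * R ^ 2 / ((n : ℝ) - 2)) / 2 - δ < t →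
      t < (1 - n * R ^ 2 / ((n : ℝ) - 2)) / 2 →
      |(((ψp t) ^ n - R ^ n) / (ψp t) ^ (n - 1)) ^ 2
          - (2 * n * ((1 - n * R ^ 2 / ((n : ℝ) - 2)) / 2 - t)
            - (4 * ((n : ℝ) - 1) * Real.sqrt (2 * n) / (3 * R))
              * ((1 - n * R ^ 2 / ((n : ℝ) - 2)) / 2 - t)
              * Real.sqrt ((1 - n * R ^ 2 / ((n : ℝ) - 2)) / 2 - t))|
        ≤ C * ((1 - n * R ^ 2 / ((n : ℝ) - 2)) / 2 - t) ^ 2) ∧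
    (∃ C δ : ℝ, 0 < δ ∧ ∀ t : ℝ,
      (1 - n * R ^ 2 / ((n : ℝ) - 2)) / 2 - δ < t →
      t < (1 - n * R ^ 2 / ((n : ℝ) - 2)) / 2 →
      |(((ψm t) ^ n - R ^ n) / (ψm t) ^ (n - 1)) ^ 2
          - (2 * n * ((1 - n * R ^ 2 / ((n : ℝ) - 2)) / 2 - t)
            + (4 * ((n : ℝ) - 1) * Real.sqrt (2 * n) / (3 * R))
              * ((1 - n * R ^ 2 / ((n : ℝ) - 2)) / 2 - t)
              * Real.sqrt ((1 - n * R ^ 2 / ((n : ℝ) - 2)) / 2 - t))|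
        ≤ C * ((1 - n * R ^ 2 / ((n : ℝ) - 2)) / 2 - t) ^ 2) ∧
    Tendsto (fun t : ℝ =>
        (((ψp t) ^ n - R ^ n) / (ψp t) ^ (n - 1)) ^ 2
          / ((1 - n * R ^ 2 / ((n : ℝ) - 2)) / 2 - t))
      (𝓝[<] ((1 - n * R ^ 2 / ((n : ℝ) - 2)) / 2)) (𝓝 (2 * (n : ℝ))) ∧
    Tendsto (fun t : ℝ =>
        (((ψm t) ^ n - R ^ n) / (ψm t) ^ (n - 1)) ^ 2
          / ((1 - n * R ^ 2 / ((n : ℝ) - 2)) / 2 - t))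
      (𝓝[<] ((1 - n * R ^ 2 / ((n : ℝ) - 2)) / 2)) (𝓝 (2 * (n : ℝ))) := by
  obtain ⟨M, hM⟩ : ∃ y:ℝ, y = (1 - n * R ^ 2 / ((n : ℝ) - 2)) / 2 := ⟨_, rfl⟩
  rw [← hM] at hψm hψp ⊢
  have hn3 : (3:ℝ) ≤ (n:ℝ) := by exact_mod_cast hn
  have hn2 : (0:ℝ) < (n:ℝ) - 2 := by linarith
  have hnpos : (0:ℝ) < (n:ℝ) := by linarith
  have hM0 : 0 < M := by
    rw [hM]
    have h2 : R^2 < ((n:ℝ)-2)/n := (Real.lt_sqrt hR0.le).mp hRmax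
    have h3 : R^2*(n:ℝ) < (n:ℝ)-2 := (lt_div_iff₀ hnpos).mp h2
    have h4 : (n:ℝ)*R^2/((n:ℝ)-2) < 1 := by
      rw [div_lt_one hn2]; nlinarith
    linarith
  have huRR : WRuF n R R = M := by rw [WRuF_RR n hn R hR0, hM]
  obtain ⟨C, s₀, hC0, hs₀0, hs₀R, hkey⟩ := WRaux_key n hn R hR0
  have hanti := WRuF_anti n hn R hR0
  have hmono := WRuF_mono n hn R hR0
  -- Part 1 : ψp estimate
  have P1 : ∃ C' δ : ℝ, 0 < δ ∧ ∀ t : ℝ, M - δ < t → t < M →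
      |(((ψp t)^n - R^n)/(ψp t)^(n-1))^2 - (2*(n:ℝ)*(M - t)
        - (4*((n:ℝ)-1)*Real.sqrt (2*(n:ℝ))/(3*R))*(M - t)*Real.sqrt (M-t))|
        ≤ C'*(M-t)^2 := by
    have hs₀p0 : 0 < min s₀ (r₂ - R) := lt_min hs₀0 (by linarith)
    have hRs : R < R + min s₀ (r₂ - R) := by linarith
    have hup : WRuF n R (R + min s₀ (r₂ - R)) < M := by
      rw [← huRR]
      exact hanti (mem_Ici.mpr le_rfl) (mem_Ici.mpr (by linarith)) hRs
    refine ⟨C, min M (M - WRuF n R (R + min s₀ (r₂ - R))), lt_min hM0 (by linarith), ?_⟩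
    intro t ht1 ht2
    have htmem : t ∈ Icc 0 M := ⟨by linarith [min_le_left M (M - WRuF n R (R + min s₀ (r₂ - R)))], le_of_lt ht2⟩
    obtain ⟨hψmem, hψeq⟩ := hψp t htmem
    have hWF : WRuF n R (ψp t) = t := hψeq
    have hψle : ψp t ≤ R + min s₀ (r₂ - R) := by
      by_contra hcon
      push_neg at hcon
      have h5 : WRuF n R (ψp t) < WRuF n R (R + min s₀ (r₂ - R)) :=
        hanti (mem_Ici.mpr (by linarith)) (mem_Ici.mpr (by linarith [hψmem.1])) hcon
      rw [hWF] at h5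
      have h6 := min_le_right M (M - WRuF n R (R + min s₀ (r₂ - R)))
      linarith
    have habs : |ψp t - R| ≤ s₀ := by
      rw [abs_of_nonneg (by linarith [hψmem.1] : (0:ℝ) ≤ ψp t - R)]
      have := min_le_left s₀ (r₂ - R)
      linarith
    obtain ⟨h1, h2, h3, h4⟩ := hkey (ψp t) habs
    have h5 := h3 hψmem.1
    have hveq : WRuF n R R - WRuF n R (ψp t) = M - t := by rw [huRR, hWF]
    rw [hveq] at h5
    exact h5
  -- Part 2 : ψm estimate
  have P2 : ∃ C' δ : ℝ, 0 < δ ∧ ∀ t : ℝ, M - δ < t → t < M →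
      |(((ψm t)^n - R^n)/(ψm t)^(n-1))^2 - (2*(n:ℝ)*(M - t)
        + (4*((n:ℝ)-1)*Real.sqrt (2*(n:ℝ))/(3*R))*(M - t)*Real.sqrt (M-t))|
        ≤ C'*(M-t)^2 := by
    have hs₀m0 : 0 < min s₀ (R - r₁) := lt_min hs₀0 (by linarith)
    have hsR : R - min s₀ (R - r₁) < R := by linarith
    have hmemL : R - min s₀ (R - r₁) ∈ Ioc (0:ℝ) R := by
      constructor
      · have := min_le_left s₀ (R - r₁)
        linarith
      · linarith
    have hup : WRuF n R (R - min s₀ (R - r₁)) < M := by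
      rw [← huRR]
      exact hmono hmemL (mem_Ioc.mpr ⟨hR0, le_rfl⟩) hsR
    refine ⟨C, min M (M - WRuF n R (R - min s₀ (R - r₁))), lt_min hM0 (by linarith), ?_⟩
    intro t ht1 ht2
    have htmem : t ∈ Icc 0 M := ⟨by linarith [min_le_left M (M - WRuF n R (R - min s₀ (R - r₁)))], le_of_lt ht2⟩
    obtain ⟨hψmem, hψeq⟩ := hψm t htmem
    have hWF : WRuF n R (ψm t) = t := hψeq
    have hψmm : ψm t ∈ Ioc (0:ℝ) R := ⟨lt_of_lt_of_le hr₁0 hψmem.1, hψmem.2⟩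
    have hψge : R - min s₀ (R - r₁) ≤ ψm t := by
      by_contra hcon
      push_neg at hcon
      have h5 : WRuF n R (ψm t) < WRuF n R (R - min s₀ (R - r₁)) :=
        hmono hψmm hmemL hcon
      rw [hWF] at h5
      have h6 := min_le_right M (M - WRuF n R (R - min s₀ (R - r₁)))
      linarith
    have habs : |ψm t - R| ≤ s₀ := by
      rw [abs_of_nonpos (by linarith [hψmem.2] : ψm t - R ≤ 0)]
      have := min_le_left s₀ (R - r₁)
      linarith
    obtain ⟨h1, h2, h3, h4⟩ := hkey (ψm t) habs
    have h5 := h4 hψmem.2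
    have hveq : WRuF n R R - WRuF n R (ψm t) = M - t := by rw [huRR, hWF]
    rw [hveq] at h5
    exact h5
  -- generic limit helper
  have hcc0 : 0 ≤ 4*((n:ℝ)-1)*Real.sqrt (2*(n:ℝ))/(3*R) := by
    apply div_nonneg
    · exact mul_nonneg (by linarith) (Real.sqrt_nonneg _)
    · linarith
  have LIM : ∀ f : ℝ → ℝ, ∀ C' δ : ℝ, 0 < δ →
      (∀ t : ℝ, M - δ < t → t < M →
        |f t - 2*(n:ℝ)*(M-t)| ≤ (4*((n:ℝ)-1)*Real.sqrt (2*(n:ℝ))/(3*R))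
          *((M-t)*Real.sqrt (M-t)) + C'*(M-t)^2) →
      Tendsto (fun t => f t/(M-t)) (𝓝[<] M) (𝓝 (2*(n:ℝ))) := by
    intro f C' δ hδ hbound
    have h1 : Tendsto (fun t:ℝ => M - t) (𝓝[<] M) (𝓝 0) := by
      have h : Tendsto (fun t:ℝ => M - t) (𝓝 M) (𝓝 (M - M)) :=
        (continuous_const.sub continuous_id).tendsto M
      rw [sub_self] at h
      exact h.mono_left nhdsWithin_le_nhds
    have h2 : Tendsto (fun t:ℝ => Real.sqrt (M-t)) (𝓝[<] M) (𝓝 0) := by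
      have := (Real.continuous_sqrt.tendsto 0).comp h1
      simpa [Function.comp_def, Real.sqrt_zero] using this
    have hg0 : Tendsto (fun t:ℝ => (4*((n:ℝ)-1)*Real.sqrt (2*(n:ℝ))/(3*R))*Real.sqrt (M-t)
        + C'*(M-t)) (𝓝[<] M) (𝓝 0) := by
      have := (h2.const_mul (4*((n:ℝ)-1)*Real.sqrt (2*(n:ℝ))/(3*R))).add (h1.const_mul C')
      simpa using this
    have hev : ∀ᶠ t in 𝓝[<] M, ‖f t/(M-t) - 2*(n:ℝ)‖
        ≤ (4*((n:ℝ)-1)*Real.sqrt (2*(n:ℝ))/(3*R))*Real.sqrt (M-t) + C'*(M-t) := by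
      filter_upwards [Ioo_mem_nhdsLT_of_mem
        (⟨by linarith, le_refl M⟩ : M ∈ Ioc (M-δ) M)] with t ht
      have hv0 : (0:ℝ) < M - t := by linarith [ht.2]
      have hb := hbound t ht.1 ht.2
      rw [Real.norm_eq_abs]
      have e : f t/(M-t) - 2*(n:ℝ) = (f t - 2*(n:ℝ)*(M-t))/(M-t) := by
        field_simp
      rw [e, abs_div, abs_of_pos hv0, div_le_iff₀ hv0]
      calc |f t - 2*(n:ℝ)*(M-t)|
          ≤ (4*((n:ℝ)-1)*Real.sqrt (2*(n:ℝ))/(3*R))*((M-t)*Real.sqrt (M-t)) + C'*(M-t)^2 := hb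
        _ = ((4*((n:ℝ)-1)*Real.sqrt (2*(n:ℝ))/(3*R))*Real.sqrt (M-t) + C'*(M-t))*(M-t) := by
            ring
    have h0 := squeeze_zero_norm' hev hg0
    have h3 := h0.add (tendsto_const_nhds (x := 2*(n:ℝ)) (f := 𝓝[<] M))
    rw [zero_add] at h3
    convert h3 using 2 with t
    ring
  refine ⟨P1, P2, ?_, ?_⟩
  · obtain ⟨C', δ, hδ, hb⟩ := P1
    apply LIM _ C' δ hδ
    intro t h1 h2
    have hbt := hb t h1 h2
    have hv0 : (0:ℝ) ≤ M - t := by linarith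
    have hsq : 0 ≤ Real.sqrt (M-t) := Real.sqrt_nonneg _
    have e : (((ψp t)^n - R^n)/(ψp t)^(n-1))^2 - 2*(n:ℝ)*(M-t)
        = ((((ψp t)^n - R^n)/(ψp t)^(n-1))^2 - (2*(n:ℝ)*(M - t)
          - (4*((n:ℝ)-1)*Real.sqrt (2*(n:ℝ))/(3*R))*(M - t)*Real.sqrt (M-t)))
          - (4*((n:ℝ)-1)*Real.sqrt (2*(n:ℝ))/(3*R))*(M - t)*Real.sqrt (M-t) := by ring
    rw [e]
    have htri := abs_sub ((((ψp t)^n - R^n)/(ψp t)^(n-1))^2 - (2*(n:ℝ)*(M - t)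
        - (4*((n:ℝ)-1)*Real.sqrt (2*(n:ℝ))/(3*R))*(M - t)*Real.sqrt (M-t)))
        ((4*((n:ℝ)-1)*Real.sqrt (2*(n:ℝ))/(3*R))*(M - t)*Real.sqrt (M-t))
    have habs2 : |(4*((n:ℝ)-1)*Real.sqrt (2*(n:ℝ))/(3*R))*(M - t)*Real.sqrt (M-t)|
        = (4*((n:ℝ)-1)*Real.sqrt (2*(n:ℝ))/(3*R))*((M - t)*Real.sqrt (M-t)) := by
      rw [abs_of_nonneg]
      · ring
      · exact mul_nonneg (mul_nonneg hcc0 hv0) hsq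
    rw [habs2] at htri
    linarith
  · obtain ⟨C', δ, hδ, hb⟩ := P2
    apply LIM _ C' δ hδ
    intro t h1 h2
    have hbt := hb t h1 h2
    have hv0 : (0:ℝ) ≤ M - t := by linarith
    have hsq : 0 ≤ Real.sqrt (M-t) := Real.sqrt_nonneg _
    have e : (((ψm t)^n - R^n)/(ψm t)^(n-1))^2 - 2*(n:ℝ)*(M-t)
        = ((((ψm t)^n - R^n)/(ψm t)^(n-1))^2 - (2*(n:ℝ)*(M - t)
          + (4*((n:ℝ)-1)*Real.sqrt (2*(n:ℝ))/(3*R))*(M - t)*Real.sqrt (M-t)))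
          + (4*((n:ℝ)-1)*Real.sqrt (2*(n:ℝ))/(3*R))*(M - t)*Real.sqrt (M-t) := by ring
    rw [e]
    have htri := abs_add_le ((((ψm t)^n - R^n)/(ψm t)^(n-1))^2 - (2*(n:ℝ)*(M - t)
        + (4*((n:ℝ)-1)*Real.sqrt (2*(n:ℝ))/(3*R))*(M - t)*Real.sqrt (M-t)))
        ((4*((n:ℝ)-1)*Real.sqrt (2*(n:ℝ))/(3*R))*(M - t)*Real.sqrt (M-t))
    have habs2 : |(4*((n:ℝ)-1)*Real.sqrt (2*(n:ℝ))/(3*R))*(M - t)*Real.sqrt (M-t)|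
        = (4*((n:ℝ)-1)*Real.sqrt (2*(n:ℝ))/(3*R))*((M - t)*Real.sqrt (M-t)) := by
      rw [abs_of_nonneg]
      · ring
      · exact mul_nonneg (mul_nonneg hcc0 hv0) hsq
    rw [habs2] at htri
    linarith
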